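/- Let D be a disjunctive database with D = reduction(D), and let D' be obtained from D by adding any collection of disjunctions each of which is subsumed by some disjunction of D. Then D' has exactly the same minimal models as D. -/
import Mathlib


variable {F : Type*} [DecidableEq F]

/-- M is a model of the disjunctive database D: it meets every disjunction. -/
def IsModel (D : Finset (Finset F)) (M : Finset F) : Prop :=
  ∀ d ∈ D, ∃ t ∈ d, t ∈ M

/-- M is a minimal model of D. -/
def IsMinModel (D : Finset (Finset F)) (M : Finset F) : Prop :=
  IsModel D M ∧ ∀ M' ⊂ M, ¬ IsModel D M'

/-- reduction removes every disjunction properly containing another disjunction of D. -/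
def reduction (D : Finset (Finset F)) : Finset (Finset F) :=
  D.filter (fun d => ∀ d' ∈ D, ¬ d' ⊂ d)

theorem stmt2 (D D' : Finset (Finset F))
    (hD : ∀ d ∈ D, d.Nonempty) (hD' : ∀ d ∈ D', d.Nonempty)
    (hred : reduction D = D)
    (hsub : D ⊆ D')
    (hextra : ∀ d' ∈ D', d' ∉ D → ∃ d ∈ D, d ⊂ d') :
    ∀ M : Finset F, IsMinModel D' M ↔ IsMinModel D M := by
  have key : ∀ M : Finset F, IsModel D' M ↔ IsModel D M := by
    intro M
    constructor
    · intro h d hd; exact h d (hsub hd)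
    · intro h d' hd'
      by_cases hmem : d' ∈ D
      · exact h d' hmem
      · obtain ⟨d, hdD, hdsub⟩ := hextra d' hd' hmem
        obtain ⟨t, ht, htM⟩ := h d hdD
        exact ⟨t, hdsub.subset ht, htM⟩
  intro M
  unfold IsMinModel
  simp only [key]
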